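/- There exists a universal constant C such that for every a ∈ ℝ with |||a||| > 0 and every p ∈ [−π,π]³ with e(p) = a (so that s₁²+s₂²+s₃² > 0), the Gauss curvature and mean curvature of Σ_a at p satisfy |K(p)| ≤ C / |||a||| and |H(p)| ≤ C / |||a|||^{1/2}. -/
import Mathlib


open Real

noncomputable section

/-- The dispersion relation `e(p) = ∑ (1 - cos pⱼ)`. -/
def e3 (p : Fin 3 → ℝ) : ℝ := ∑ i, (1 - Real.cos (p i))

/-- `ssum p = s₁² + s₂² + s₃²`. -/
def ssum (p : Fin 3 → ℝ) : ℝ := ∑ i, Real.sin (p i) ^ 2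

/-- `M(p) = s₁²c₂c₃ + s₂²c₁c₃ + s₃²c₁c₂`. -/
def Mf (p : Fin 3 → ℝ) : ℝ :=
  Real.sin (p 0) ^ 2 * Real.cos (p 1) * Real.cos (p 2) +
  Real.sin (p 1) ^ 2 * Real.cos (p 0) * Real.cos (p 2) +
  Real.sin (p 2) ^ 2 * Real.cos (p 0) * Real.cos (p 1)

/-- Gauss curvature `K(p) = M(p)/(s₁²+s₂²+s₃²)²`. -/
def Kf (p : Fin 3 → ℝ) : ℝ := Mf p / (ssum p) ^ 2

/-- Mean curvature
`H(p) = (s₁²+s₂²+s₃²)^{−1/2} (3−a − (s₁²c₁+s₂²c₂+s₃²c₃)/(s₁²+s₂²+s₃²))` with `a = e(p)`. -/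
def Hf (p : Fin 3 → ℝ) : ℝ :=
  (3 - e3 p - (∑ i, Real.sin (p i) ^ 2 * Real.cos (p i)) / ssum p) / Real.sqrt (ssum p)

/-- `|||α||| = min{|α|, |α−2|, |α−3|, |α−4|, |α−6|}`. -/
def tri (α : ℝ) : ℝ := min |α| (min |α - 2| (min |α - 3| (min |α - 4| |α - 6|)))

lemma key_ineq (t0 t1 t2 : ℝ) (h0a : 0 ≤ t0) (h0b : t0 ≤ 2) (h1a : 0 ≤ t1) (h1b : t1 ≤ 2)
    (h2a : 0 ≤ t2) (h2b : t2 ≤ 2) :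
    tri (t0 + t1 + t2) ≤ t0 * (2 - t0) + t1 * (2 - t1) + t2 * (2 - t2) := by
  have l0 : tri (t0 + t1 + t2) ≤ |t0 + t1 + t2| := min_le_left _ _
  have l2 : tri (t0 + t1 + t2) ≤ |t0 + t1 + t2 - 2| :=
    le_trans (min_le_right _ _) (min_le_left _ _)
  have l4 : tri (t0 + t1 + t2) ≤ |t0 + t1 + t2 - 4| :=
    le_trans (min_le_right _ _) (le_trans (min_le_right _ _)
      (le_trans (min_le_right _ _) (min_le_left _ _)))
  have l6 : tri (t0 + t1 + t2) ≤ |t0 + t1 + t2 - 6| :=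
    le_trans (min_le_right _ _) (le_trans (min_le_right _ _)
      (le_trans (min_le_right _ _) (min_le_right _ _)))
  rcases le_total t0 1 with c0 | c0 <;> rcases le_total t1 1 with c1 | c1 <;>
    rcases le_total t2 1 with c2 | c2
  · refine l0.trans (abs_le.mpr ⟨by nlinarith, by nlinarith⟩)
  · refine l2.trans (abs_le.mpr ⟨by nlinarith, by nlinarith⟩)
  · refine l2.trans (abs_le.mpr ⟨by nlinarith, by nlinarith⟩)
  · refine l4.trans (abs_le.mpr ⟨by nlinarith, by nlinarith⟩)
  · refine l2.trans (abs_le.mpr ⟨by nlinarith, by nlinarith⟩)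
  · refine l4.trans (abs_le.mpr ⟨by nlinarith, by nlinarith⟩)
  · refine l4.trans (abs_le.mpr ⟨by nlinarith, by nlinarith⟩)
  · refine l6.trans (abs_le.mpr ⟨by nlinarith, by nlinarith⟩)

/-- For `a` with `|||a||| > 0` and `p ∈ [−π,π]³` with `e(p) = a`, one has `ssum p > 0`,
`|K(p)| ≤ C/|||a|||` and `|H(p)| ≤ C/|||a|||^{1/2}` for a universal constant `C`. -/
theorem stmt9 :
    ∃ C : ℝ, 0 < C ∧ ∀ a : ℝ, 0 < tri a → ∀ p : Fin 3 → ℝ, (∀ i, |p i| ≤ π) → e3 p = a →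
      0 < ssum p ∧ |Kf p| ≤ C / tri a ∧ |Hf p| ≤ C / Real.sqrt (tri a) := by
  refine ⟨4, by norm_num, fun a ha p _ hea => ?_⟩
  have hc : ∀ i : Fin 3, -1 ≤ Real.cos (p i) ∧ Real.cos (p i) ≤ 1 :=
    fun i => ⟨Real.neg_one_le_cos _, Real.cos_le_one _⟩
  obtain ⟨hc0a, hc0b⟩ := hc 0
  obtain ⟨hc1a, hc1b⟩ := hc 1
  obtain ⟨hc2a, hc2b⟩ := hc 2
  have hss : ssum p = (1 - Real.cos (p 0)) * (2 - (1 - Real.cos (p 0)))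
      + (1 - Real.cos (p 1)) * (2 - (1 - Real.cos (p 1)))
      + (1 - Real.cos (p 2)) * (2 - (1 - Real.cos (p 2))) := by
    simp only [ssum, Fin.sum_univ_three, Real.sin_sq]; ring
  have he : e3 p = (1 - Real.cos (p 0)) + (1 - Real.cos (p 1)) + (1 - Real.cos (p 2)) := by
    simp [e3, Fin.sum_univ_three]; ring
  have htri : tri a ≤ ssum p := by
    rw [← hea, hss, he]
    exact key_ineq _ _ _ (by linarith) (by linarith) (by linarith) (by linarith)
      (by linarith) (by linarith)
  have sspos : 0 < ssum p := lt_of_lt_of_le ha htri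
  refine ⟨sspos, ?_, ?_⟩
  · -- Gauss curvature bound
    have hM : |Mf p| ≤ ssum p := by
      rw [Mf, ssum, Fin.sum_univ_three]
      apply abs_le.mpr
      constructor <;>
        nlinarith [sq_nonneg (Real.sin (p 0)), sq_nonneg (Real.sin (p 1)),
          sq_nonneg (Real.sin (p 2)), mul_nonneg (mul_nonneg (sub_nonneg.mpr hc1b) (sub_nonneg.mpr hc2b)) (sq_nonneg (Real.sin (p 0))),
          mul_nonneg (mul_nonneg (sub_nonneg.mpr hc0b) (sub_nonneg.mpr hc2b)) (sq_nonneg (Real.sin (p 1))),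
          mul_nonneg (mul_nonneg (sub_nonneg.mpr hc0b) (sub_nonneg.mpr hc1b)) (sq_nonneg (Real.sin (p 2))),
          mul_nonneg (mul_nonneg (sub_nonneg.mpr hc1b) (by linarith : (0:ℝ) ≤ 1 + Real.cos (p 2))) (sq_nonneg (Real.sin (p 0))),
          mul_nonneg (mul_nonneg (sub_nonneg.mpr hc0b) (by linarith : (0:ℝ) ≤ 1 + Real.cos (p 2))) (sq_nonneg (Real.sin (p 1))),
          mul_nonneg (mul_nonneg (sub_nonneg.mpr hc0b) (by linarith : (0:ℝ) ≤ 1 + Real.cos (p 1))) (sq_nonneg (Real.sin (p 2))),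
          mul_nonneg (mul_nonneg (sub_nonneg.mpr hc2b) (by linarith : (0:ℝ) ≤ 1 + Real.cos (p 1))) (sq_nonneg (Real.sin (p 0))),
          mul_nonneg (mul_nonneg (sub_nonneg.mpr hc2b) (by linarith : (0:ℝ) ≤ 1 + Real.cos (p 0))) (sq_nonneg (Real.sin (p 1))),
          mul_nonneg (mul_nonneg (sub_nonneg.mpr hc1b) (by linarith : (0:ℝ) ≤ 1 + Real.cos (p 0))) (sq_nonneg (Real.sin (p 2))),
          mul_nonneg (mul_nonneg (by linarith : (0:ℝ) ≤ 1 + Real.cos (p 1)) (by linarith : (0:ℝ) ≤ 1 + Real.cos (p 2))) (sq_nonneg (Real.sin (p 0))),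
          mul_nonneg (mul_nonneg (by linarith : (0:ℝ) ≤ 1 + Real.cos (p 0)) (by linarith : (0:ℝ) ≤ 1 + Real.cos (p 2))) (sq_nonneg (Real.sin (p 1))),
          mul_nonneg (mul_nonneg (by linarith : (0:ℝ) ≤ 1 + Real.cos (p 0)) (by linarith : (0:ℝ) ≤ 1 + Real.cos (p 1))) (sq_nonneg (Real.sin (p 2)))]
    have h1 : |Kf p| ≤ 1 / ssum p := by
      rw [Kf, abs_div, abs_of_pos (by positivity : (0:ℝ) < ssum p ^ 2),
        div_le_div_iff₀ (by positivity) sspos]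
      nlinarith
    calc |Kf p| ≤ 1 / ssum p := h1
      _ ≤ 1 / tri a := one_div_le_one_div_of_le ha htri
      _ ≤ 4 / tri a := by
          rw [div_le_div_iff₀ ha ha]; nlinarith
  · -- mean curvature bound
    have ha06 : 0 ≤ e3 p ∧ e3 p ≤ 6 := by rw [he]; constructor <;> linarith
    have hS : |∑ i, Real.sin (p i) ^ 2 * Real.cos (p i)| ≤ ssum p := by
      rw [ssum, Fin.sum_univ_three, Fin.sum_univ_three]
      apply abs_le.mpr
      constructor <;>
        nlinarith [mul_nonneg (sub_nonneg.mpr hc0b) (sq_nonneg (Real.sin (p 0))),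
          mul_nonneg (sub_nonneg.mpr hc1b) (sq_nonneg (Real.sin (p 1))),
          mul_nonneg (sub_nonneg.mpr hc2b) (sq_nonneg (Real.sin (p 2))),
          mul_nonneg (by linarith : (0:ℝ) ≤ 1 + Real.cos (p 0)) (sq_nonneg (Real.sin (p 0))),
          mul_nonneg (by linarith : (0:ℝ) ≤ 1 + Real.cos (p 1)) (sq_nonneg (Real.sin (p 1))),
          mul_nonneg (by linarith : (0:ℝ) ≤ 1 + Real.cos (p 2)) (sq_nonneg (Real.sin (p 2)))]
    have hSd : |(∑ i, Real.sin (p i) ^ 2 * Real.cos (p i)) / ssum p| ≤ 1 := by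
      rw [abs_div, abs_of_pos sspos, div_le_one sspos]; exact hS
    have hnum : |3 - e3 p - (∑ i, Real.sin (p i) ^ 2 * Real.cos (p i)) / ssum p| ≤ 4 := by
      obtain ⟨hq1, hq2⟩ := abs_le.mp hSd
      apply abs_le.mpr
      constructor <;> [linarith [ha06.2]; linarith [ha06.1]]
    have hsq : 0 < Real.sqrt (ssum p) := Real.sqrt_pos.mpr sspos
    have hsqt : 0 < Real.sqrt (tri a) := Real.sqrt_pos.mpr ha
    have hmono : Real.sqrt (tri a) ≤ Real.sqrt (ssum p) := Real.sqrt_le_sqrt htri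
    rw [Hf, abs_div, abs_of_pos hsq]
    calc |3 - e3 p - (∑ i, Real.sin (p i) ^ 2 * Real.cos (p i)) / ssum p| / Real.sqrt (ssum p)
        ≤ 4 / Real.sqrt (ssum p) := by gcongr
      _ ≤ 4 / Real.sqrt (tri a) := by
          rw [div_le_div_iff₀ hsq hsqt]; nlinarith
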